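/- Let E be a Polish space with Borel σ-algebra 𝓔 and U a compact metric space, let P^a(x,·) be a controlled transition kernel, and let R ⊆ R₁ be two concentric closed balls in E. Let u_n, u : E → U be Borel measurable controls with u_n(x) → u(x) for every x ∈ E, such that for every x ∈ E, sup_{B ∈ 𝓔} |Q^{u_n}(x,B) − Q^{u}(x,B)| → 0 as n → ∞. Assume (EC): sup_{x ∈ R} sup_v E_x^v[(τ_R)²] < ∞, where v runs over {u_n : n ∈ ℕ} ∪ {u}. Then for every positive integer k and every x ∈ R, sup over Borel subsets B of R of |(Π^{u_n})^k(x,B) − (Π^{u})^k(x,B)| → 0 as n → ∞. -/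

import Mathlib

open MeasureTheory ProbabilityTheory Filter
open scoped ENNReal

/-- First hitting time of a set `B` by the path `ω` (`∞` if never hit). -/
noncomputable def hitTime {E : Type*} (B : Set E) (ω : ℕ → E) : ℕ∞ :=
  ⨅ (n : ℕ) (_ : ω n ∈ B), (n : ℕ∞)

/-- `τ_R = D_{R₁ᶜ} + D_R ∘ θ_{D_{R₁ᶜ}}`: first entrance time to `R` after first
leaving `R₁`. -/
noncomputable def tauR {E : Type*} (R R1 : Set E) (ω : ℕ → E) : ℕ∞ :=
  hitTime R1ᶜ ω + hitTime R (fun n => ω ((hitTime R1ᶜ ω).toNat + n))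

/-- Prepend a point to a path. -/
def prepend {E : Type*} (x : E) (ω : ℕ → E) : ℕ → E :=
  fun n => match n with
  | 0 => x
  | k + 1 => ω k

/-- `Pl` is the family of Ionescu–Tulcea laws `P_x` of the Markov chain with transition
kernel `Q` started at `x`: it is characterized by being a measurable family of
probability measures satisfying the one-step recursion
`P_x = (prepend x)_* ((Q x) bind Pl)`. -/
def IsPathLaw {E : Type*} [MeasurableSpace E] (Q : Kernel E E)
    (Pl : E → Measure (ℕ → E)) : Prop :=
  Measurable Pl ∧ (∀ x, IsProbabilityMeasure (Pl x)) ∧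
    ∀ x, Pl x = ((Q x).bind Pl).map (prepend x)

/-- The embedded kernel `Π(x,B) = P_x(τ_R < ∞, X_{τ_R} ∈ B)`, as a measure on `E`. -/
noncomputable def embMeas {E : Type*} [MeasurableSpace E] (R R1 : Set E)
    (Pl : E → Measure (ℕ → E)) (x : E) : Measure E :=
  ((Pl x).restrict {ω | tauR R R1 ω ≠ ⊤}).map (fun ω => ω ((tauR R R1 ω).toNat))

/-- `k`-th iterate of a measure-valued map (sub-Markov transition function):
`Π^0(x,·) = δ_x`, `Π^{k+1}(x,B) = ∫ Π^k(y,B) Π(x,dy)`. -/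
noncomputable def mIter {E : Type*} [MeasurableSpace E] (Pi0 : E → Measure E) :
    ℕ → E → Measure E
  | 0 => fun x => Measure.dirac x
  | k + 1 => fun x => (Pi0 x).bind (mIter Pi0 k)

/-- The kernel `Q^u(x,·) = P^{u(x)}(x,·)` of a Borel measurable control `u`. -/
noncomputable def Qctrl {E U : Type*} [MeasurableSpace E] [MeasurableSpace U]
    (P : Kernel (E × U) E) (u : E → U) (hu : Measurable u) : Kernel E E :=
  P.comap (fun x => (x, u x)) (measurable_id.prodMk hu)

/-- Total variation distance `sup_{B ∈ 𝓔} |μ(B) − ν(B)|`. -/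
noncomputable def tvDist {E : Type*} [MeasurableSpace E] (μ ν : Measure E) : ℝ :=
  ⨆ B : {B : Set E // MeasurableSet B}, |(μ B.1).toReal - (ν B.1).toReal|

open scoped Classical

section EDist

variable {α : Type*} {β : Type*} [MeasurableSpace α] [MeasurableSpace β]

/-- Total-variation-type distance with values in `ℝ≥0∞`. -/
noncomputable def eDist (μ ν : Measure α) : ℝ≥0∞ :=
  ⨆ B : {B : Set α // MeasurableSet B}, (μ B.1 - ν B.1) ⊔ (ν B.1 - μ B.1)

lemma apply_le_eDist {μ ν : Measure α} {B : Set α} (hB : MeasurableSet B) :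
    (μ B - ν B) ⊔ (ν B - μ B) ≤ eDist μ ν :=
  le_iSup (fun B : {B : Set α // MeasurableSet B} =>
    (μ B.1 - ν B.1) ⊔ (ν B.1 - μ B.1)) ⟨B, hB⟩

lemma eDist_le {μ ν : Measure α} {c : ℝ≥0∞}
    (h : ∀ B : Set α, MeasurableSet B → (μ B - ν B) ⊔ (ν B - μ B) ≤ c) :
    eDist μ ν ≤ c :=
  iSup_le fun B => h B.1 B.2

lemma eDist_comm (μ ν : Measure α) : eDist μ ν = eDist ν μ := by
  unfold eDist
  congr 1
  funext B
  rw [sup_comm]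

lemma eDist_le_one {μ ν : Measure α} (hμ : μ Set.univ ≤ 1) (hν : ν Set.univ ≤ 1) :
    eDist μ ν ≤ 1 :=
  eDist_le fun B _ => sup_le
    (tsub_le_self.trans ((measure_mono (Set.subset_univ B)).trans hμ))
    (tsub_le_self.trans ((measure_mono (Set.subset_univ B)).trans hν))

lemma eDist_ne_top {μ ν : Measure α} (hμ : μ Set.univ ≤ 1) (hν : ν Set.univ ≤ 1) :
    eDist μ ν ≠ ⊤ :=
  ((eDist_le_one hμ hν).trans_lt ENNReal.one_lt_top).ne

/-- Hahn-decomposition bound on the difference of lower integrals of a function `≤ 1`. -/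
lemma lintegral_tsub_le_eDist (μ ν : Measure α) [IsFiniteMeasure μ] [IsFiniteMeasure ν]
    {f : α → ℝ≥0∞} (hf : Measurable f) (hf1 : ∀ a, f a ≤ 1) :
    ∫⁻ a, f a ∂μ - ∫⁻ a, f a ∂ν ≤ eDist μ ν := by
  obtain ⟨s, hs, hνμ, hμν⟩ := hahn_decomposition (μ := μ) (ν := ν)
  have hres : ν.restrict s ≤ μ.restrict s := by
    rw [Measure.le_iff]
    intro t ht
    rw [Measure.restrict_apply ht, Measure.restrict_apply ht]
    exact hνμ _ (ht.inter hs) Set.inter_subset_right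
  have hres' : μ.restrict sᶜ ≤ ν.restrict sᶜ := by
    rw [Measure.le_iff]
    intro t ht
    rw [Measure.restrict_apply ht, Measure.restrict_apply ht]
    exact hμν _ (ht.inter hs.compl) Set.inter_subset_right
  have h2 : ∫⁻ a in s, f a ∂μ ≤ ∫⁻ a in s, f a ∂ν + (μ s - ν s) := by
    have hdecomp : μ.restrict s = (μ.restrict s - ν.restrict s) + ν.restrict s :=
      (Measure.sub_add_cancel_of_le hres).symm
    have hρ : ∫⁻ a, f a ∂(μ.restrict s - ν.restrict s) ≤ μ s - ν s := by
      calc ∫⁻ a, f a ∂(μ.restrict s - ν.restrict s)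
          ≤ ∫⁻ _, 1 ∂(μ.restrict s - ν.restrict s) := lintegral_mono hf1
        _ = (μ.restrict s - ν.restrict s) Set.univ := lintegral_one
        _ = μ.restrict s Set.univ - ν.restrict s Set.univ :=
            Measure.sub_apply MeasurableSet.univ hres
        _ = μ s - ν s := by
            rw [Measure.restrict_apply MeasurableSet.univ, Measure.restrict_apply MeasurableSet.univ,
              Set.univ_inter]
    calc ∫⁻ a in s, f a ∂μ = ∫⁻ a, f a ∂((μ.restrict s - ν.restrict s) + ν.restrict s) := by
          rw [← hdecomp]
      _ = ∫⁻ a, f a ∂(μ.restrict s - ν.restrict s) + ∫⁻ a in s, f a ∂ν :=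
          lintegral_add_measure _ _ _
      _ ≤ (μ s - ν s) + ∫⁻ a in s, f a ∂ν := add_le_add_left hρ _
      _ = ∫⁻ a in s, f a ∂ν + (μ s - ν s) := add_comm _ _
  have h3 : ∫⁻ a in sᶜ, f a ∂μ ≤ ∫⁻ a in sᶜ, f a ∂ν := lintegral_mono' hres' le_rfl
  have key : ∫⁻ a, f a ∂μ ≤ ∫⁻ a, f a ∂ν + (μ s - ν s) := by
    rw [← lintegral_add_compl f hs (μ := μ), ← lintegral_add_compl f hs (μ := ν)]
    calc ∫⁻ a in s, f a ∂μ + ∫⁻ a in sᶜ, f a ∂μ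
        ≤ (∫⁻ a in s, f a ∂ν + (μ s - ν s)) + ∫⁻ a in sᶜ, f a ∂ν := add_le_add h2 h3
      _ = ∫⁻ a in s, f a ∂ν + ∫⁻ a in sᶜ, f a ∂ν + (μ s - ν s) := by ring
  refine (tsub_le_iff_right.mpr ?_).trans (le_sup_left.trans (apply_le_eDist hs))
  rw [add_comm]
  exact key

lemma eDist_map_le {μ ν : Measure α} {g : α → β} (hg : Measurable g) :
    eDist (μ.map g) (ν.map g) ≤ eDist μ ν :=
  eDist_le fun B hB => by
    rw [Measure.map_apply hg hB, Measure.map_apply hg hB]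
    exact apply_le_eDist (hg hB)

lemma eDist_bind_le {μ₁ μ₂ : Measure α} [IsFiniteMeasure μ₁] [IsFiniteMeasure μ₂]
    {F₁ F₂ : α → Measure β} (hF₁ : Measurable F₁) (hF₂ : Measurable F₂)
    (hb₁ : ∀ y, F₁ y Set.univ ≤ 1) :
    eDist (μ₁.bind F₁) (μ₂.bind F₂) ≤ eDist μ₁ μ₂ + ∫⁻ y, eDist (F₁ y) (F₂ y) ∂μ₂ := by
  refine eDist_le fun B hB => ?_
  rw [Measure.bind_apply hB hF₁.aemeasurable, Measure.bind_apply hB hF₂.aemeasurable]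
  have hm₁ : Measurable fun y => F₁ y B := (Measure.measurable_coe hB).comp hF₁
  have hm₂ : Measurable fun y => F₂ y B := (Measure.measurable_coe hB).comp hF₂
  have h1le : ∀ y, F₁ y B ≤ 1 := fun y => (measure_mono (Set.subset_univ B)).trans (hb₁ y)
  have hdiff1 : ∀ y, F₁ y B - F₂ y B ≤ eDist (F₁ y) (F₂ y) := fun y =>
    le_sup_left.trans (apply_le_eDist hB)
  have hdiff2 : ∀ y, F₂ y B - F₁ y B ≤ eDist (F₁ y) (F₂ y) := fun y =>
    le_sup_right.trans (apply_le_eDist hB)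
  have hint1 : ∫⁻ y, F₁ y B ∂μ₂ - ∫⁻ y, F₂ y B ∂μ₂ ≤ ∫⁻ y, eDist (F₁ y) (F₂ y) ∂μ₂ := by
    refine tsub_le_iff_right.mpr ?_
    calc ∫⁻ y, F₁ y B ∂μ₂ ≤ ∫⁻ y, (F₁ y B - F₂ y B) + F₂ y B ∂μ₂ :=
          lintegral_mono fun y => le_tsub_add
      _ = ∫⁻ y, F₁ y B - F₂ y B ∂μ₂ + ∫⁻ y, F₂ y B ∂μ₂ := lintegral_add_right _ hm₂
      _ ≤ ∫⁻ y, eDist (F₁ y) (F₂ y) ∂μ₂ + ∫⁻ y, F₂ y B ∂μ₂ :=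
          add_le_add_left (lintegral_mono hdiff1) _
  have hint2 : ∫⁻ y, F₂ y B ∂μ₂ - ∫⁻ y, F₁ y B ∂μ₂ ≤ ∫⁻ y, eDist (F₁ y) (F₂ y) ∂μ₂ := by
    refine tsub_le_iff_right.mpr ?_
    calc ∫⁻ y, F₂ y B ∂μ₂ ≤ ∫⁻ y, (F₂ y B - F₁ y B) + F₁ y B ∂μ₂ :=
          lintegral_mono fun y => le_tsub_add
      _ = ∫⁻ y, F₂ y B - F₁ y B ∂μ₂ + ∫⁻ y, F₁ y B ∂μ₂ := lintegral_add_right _ hm₁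
      _ ≤ ∫⁻ y, eDist (F₁ y) (F₂ y) ∂μ₂ + ∫⁻ y, F₁ y B ∂μ₂ :=
          add_le_add_left (lintegral_mono hdiff2) _
  have hH1 : ∫⁻ y, F₁ y B ∂μ₁ - ∫⁻ y, F₁ y B ∂μ₂ ≤ eDist μ₁ μ₂ :=
    lintegral_tsub_le_eDist μ₁ μ₂ hm₁ h1le
  have hH2 : ∫⁻ y, F₁ y B ∂μ₂ - ∫⁻ y, F₁ y B ∂μ₁ ≤ eDist μ₁ μ₂ := by
    rw [eDist_comm]
    exact lintegral_tsub_le_eDist μ₂ μ₁ hm₁ h1le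
  refine sup_le ?_ ?_
  · calc ∫⁻ y, F₁ y B ∂μ₁ - ∫⁻ y, F₂ y B ∂μ₂
        ≤ (∫⁻ y, F₁ y B ∂μ₁ - ∫⁻ y, F₁ y B ∂μ₂) + (∫⁻ y, F₁ y B ∂μ₂ - ∫⁻ y, F₂ y B ∂μ₂) :=
          tsub_le_tsub_add_tsub
      _ ≤ eDist μ₁ μ₂ + ∫⁻ y, eDist (F₁ y) (F₂ y) ∂μ₂ := add_le_add hH1 hint1
  · calc ∫⁻ y, F₂ y B ∂μ₂ - ∫⁻ y, F₁ y B ∂μ₁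
        ≤ (∫⁻ y, F₂ y B ∂μ₂ - ∫⁻ y, F₁ y B ∂μ₂) + (∫⁻ y, F₁ y B ∂μ₂ - ∫⁻ y, F₁ y B ∂μ₁) :=
          tsub_le_tsub_add_tsub
      _ ≤ ∫⁻ y, eDist (F₁ y) (F₂ y) ∂μ₂ + eDist μ₁ μ₂ := add_le_add hint2 hH2
      _ = eDist μ₁ μ₂ + ∫⁻ y, eDist (F₁ y) (F₂ y) ∂μ₂ := add_comm _ _

lemma abs_toReal_sub {a b : ℝ≥0∞} (ha : a ≠ ⊤) (hb : b ≠ ⊤) :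
    |a.toReal - b.toReal| = ((a - b) ⊔ (b - a)).toReal := by
  rcases le_total a b with h | h
  · rw [abs_sub_comm, abs_of_nonneg (sub_nonneg.mpr (ENNReal.toReal_mono hb h)),
      tsub_eq_zero_of_le h, sup_eq_right.mpr zero_le, ENNReal.toReal_sub_of_le h hb]
  · rw [abs_of_nonneg (sub_nonneg.mpr (ENNReal.toReal_mono ha h)),
      tsub_eq_zero_of_le h, sup_eq_left.mpr zero_le, ENNReal.toReal_sub_of_le h ha]

end EDist

open TopologicalSpace

section Reg

variable {X : Type*} [MeasurableSpace X] [TopologicalSpace X] [OpensMeasurableSpace X]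

lemma tsub_le_iSup_of_basis {A : ℕ → Set X} (hAopen : ∀ n, IsOpen (A n))
    (hAbasis : ∀ (x : X) (U : Set X), x ∈ U → IsOpen U → ∃ n, x ∈ A n ∧ A n ⊆ U)
    (μ ν : Measure X) [IsFiniteMeasure μ] [IsFiniteMeasure ν] [ν.OuterRegular]
    {B : Set X} (hB : MeasurableSet B) :
    μ B - ν B ≤ ⨆ s : Finset ℕ,
      ((μ (⋃ i ∈ s, A i) - ν (⋃ i ∈ s, A i)) ⊔ (ν (⋃ i ∈ s, A i) - μ (⋃ i ∈ s, A i))) := by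
  classical
  refine ENNReal.le_of_forall_pos_le_add fun ε hε _ => ?_
  obtain ⟨U, hBU, hUopen, hνU⟩ :=
    Set.exists_isOpen_le_add B ν (ε := (ε : ℝ≥0∞)) (by exact_mod_cast hε.ne')
  have step1 : μ B - ν B ≤ (μ U - ν U) + ε := by
    calc μ B - ν B ≤ μ U - ν B := tsub_le_tsub (measure_mono hBU) le_rfl
      _ ≤ (μ U - ν U) + ε := by
          rw [tsub_le_iff_right]
          calc μ U ≤ (μ U - ν U) + ν U := le_tsub_add
            _ ≤ (μ U - ν U) + (ν B + ε) := add_le_add_right hνU _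
            _ = (μ U - ν U) + ↑ε + ν B := by ring
  refine step1.trans (add_le_add_left ?_ _)
  -- express U as an increasing union of finite unions of basis sets
  set V : ℕ → Set X := fun k => ⋃ i ∈ (Finset.range k).filter (fun i => A i ⊆ U), A i with hV
  have hVU : ∀ k, V k ⊆ U := by
    intro k
    refine Set.iUnion₂_subset fun i hi => ?_
    exact (Finset.mem_filter.mp hi).2
  have hmono : Monotone V := by
    intro k l hkl
    refine Set.iUnion₂_subset fun i hi => ?_
    refine Set.subset_iUnion₂ (s := fun i _ => A i) i ?_
    rcases Finset.mem_filter.mp hi with ⟨hik, hiU⟩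
    exact Finset.mem_filter.mpr ⟨Finset.mem_range.mpr (lt_of_lt_of_le (Finset.mem_range.mp hik) hkl), hiU⟩
  have hUnion : ⋃ k, V k = U := by
    apply subset_antisymm
    · exact Set.iUnion_subset hVU
    · intro x hx
      obtain ⟨n, hxn, hnU⟩ := hAbasis x U hx hUopen
      refine Set.mem_iUnion.mpr ⟨n + 1, ?_⟩
      refine Set.mem_iUnion₂.mpr ⟨n, ?_, hxn⟩
      exact Finset.mem_filter.mpr ⟨Finset.mem_range.mpr (Nat.lt_succ_self n), hnU⟩
  have hμU : μ U = ⨆ k, μ (V k) := by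
    rw [← hUnion]
    exact Directed.measure_iUnion hmono.directed_le
  rw [hμU, ENNReal.iSup_sub]
  refine iSup_le fun k => ?_
  calc μ (V k) - ν U ≤ μ (V k) - ν (V k) := tsub_le_tsub le_rfl (measure_mono (hVU k))
    _ ≤ (μ (V k) - ν (V k)) ⊔ (ν (V k) - μ (V k)) := le_sup_left
    _ ≤ _ := le_iSup (fun s : Finset ℕ =>
        (μ (⋃ i ∈ s, A i) - ν (⋃ i ∈ s, A i)) ⊔ (ν (⋃ i ∈ s, A i) - μ (⋃ i ∈ s, A i)))
        ((Finset.range k).filter (fun i => A i ⊆ U))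

lemma eDist_eq_iSup_of_basis {A : ℕ → Set X} (hAopen : ∀ n, IsOpen (A n))
    (hAbasis : ∀ (x : X) (U : Set X), x ∈ U → IsOpen U → ∃ n, x ∈ A n ∧ A n ⊆ U)
    (μ ν : Measure X) [IsFiniteMeasure μ] [IsFiniteMeasure ν]
    [μ.OuterRegular] [ν.OuterRegular] :
    eDist μ ν = ⨆ s : Finset ℕ,
      ((μ (⋃ i ∈ s, A i) - ν (⋃ i ∈ s, A i)) ⊔ (ν (⋃ i ∈ s, A i) - μ (⋃ i ∈ s, A i))) := by
  apply le_antisymm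
  · refine iSup_le fun B => sup_le ?_ ?_
    · exact tsub_le_iSup_of_basis hAopen hAbasis μ ν B.2
    · refine (tsub_le_iSup_of_basis hAopen hAbasis ν μ B.2).trans ?_
      refine le_of_eq ?_
      congr 1
      funext s
      rw [sup_comm]
  · refine iSup_le fun s => ?_
    exact le_iSup_of_le ⟨⋃ i ∈ s, A i, (isOpen_biUnion fun i _ => hAopen i).measurableSet⟩ le_rfl

end Reg

lemma measurable_eDist {α X : Type*} [MeasurableSpace α] [MeasurableSpace X]
    [TopologicalSpace X] [PolishSpace X] [BorelSpace X]
    (ξ ζ : α → Measure X) (hξ : Measurable ξ) (hζ : Measurable ζ)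
    (hξ1 : ∀ a, IsFiniteMeasure (ξ a)) (hζ1 : ∀ a, IsFiniteMeasure (ζ a)) :
    Measurable fun a => eDist (ξ a) (ζ a) := by
  classical
  have hbasis := TopologicalSpace.isBasis_countableBasis X
  have hcount : (insert ∅ (countableBasis X)).Countable :=
    (countable_countableBasis X).insert ∅
  obtain ⟨A, hA⟩ := hcount.exists_eq_range ⟨∅, Set.mem_insert _ _⟩
  have hAopen : ∀ n, IsOpen (A n) := by
    intro n
    have : A n ∈ insert ∅ (countableBasis X) := hA ▸ Set.mem_range_self n
    rcases Set.mem_insert_iff.mp this with h | h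
    · rw [h]; exact isOpen_empty
    · exact isOpen_of_mem_countableBasis h
  have hAbasis : ∀ (x : X) (U : Set X), x ∈ U → IsOpen U → ∃ n, x ∈ A n ∧ A n ⊆ U := by
    intro x U hx hU
    obtain ⟨v, hv, hxv, hvU⟩ := hbasis.exists_subset_of_mem_open hx hU
    have : v ∈ Set.range A := hA ▸ Set.mem_insert_of_mem _ hv
    obtain ⟨n, rfl⟩ := this
    exact ⟨n, hxv, hvU⟩
  have heq : ∀ a, eDist (ξ a) (ζ a) = ⨆ s : Finset ℕ,
      ((ξ a (⋃ i ∈ s, A i) - ζ a (⋃ i ∈ s, A i)) ⊔ (ζ a (⋃ i ∈ s, A i) - ξ a (⋃ i ∈ s, A i))) := by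
    intro a
    haveI := hξ1 a
    haveI := hζ1 a
    haveI : (ξ a).WeaklyRegular :=
      MeasureTheory.Measure.WeaklyRegular.of_pseudoMetrizableSpace_of_isFiniteMeasure _
    haveI : (ζ a).WeaklyRegular :=
      MeasureTheory.Measure.WeaklyRegular.of_pseudoMetrizableSpace_of_isFiniteMeasure _
    exact eDist_eq_iSup_of_basis hAopen hAbasis (ξ a) (ζ a)
  simp_rw [heq]
  refine Measurable.iSup fun s => ?_
  have hW : MeasurableSet (⋃ i ∈ s, A i) := (isOpen_biUnion fun i _ => hAopen i).measurableSet
  exact Measurable.sup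
    (Measurable.sub ((Measure.measurable_coe hW).comp hξ) ((Measure.measurable_coe hW).comp hζ))
    (Measurable.sub ((Measure.measurable_coe hW).comp hζ) ((Measure.measurable_coe hW).comp hξ))

section Path

variable {E : Type*} [MeasurableSpace E]

lemma hitTime_eq_top_iff {B : Set E} {ω : ℕ → E} : hitTime B ω = ⊤ ↔ ∀ n, ω n ∉ B := by
  constructor
  · intro h n hn
    have hle : hitTime B ω ≤ (n : ℕ∞) := iInf₂_le n hn
    rw [h] at hle
    simp at hle
  · intro h
    simp [hitTime, h]

lemma hitTime_eq_find {B : Set E} {ω : ℕ → E} (hex : ∃ n, ω n ∈ B) :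
    hitTime B ω = (Nat.find hex : ℕ∞) := by
  apply le_antisymm
  · exact iInf₂_le (Nat.find hex) (Nat.find_spec hex)
  · refine le_iInf fun n => le_iInf fun hn => ?_
    exact_mod_cast Nat.find_min' hex hn

lemma hitTime_eq_coe_iff {B : Set E} {ω : ℕ → E} {k : ℕ} :
    hitTime B ω = (k : ℕ∞) ↔ ω k ∈ B ∧ ∀ i < k, ω i ∉ B := by
  constructor
  · intro h
    have hex : ∃ n, ω n ∈ B := by
      by_contra hc
      push_neg at hc
      rw [hitTime_eq_top_iff.mpr hc] at h
      simp at h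
    rw [hitTime_eq_find hex] at h
    have hfk : Nat.find hex = k := by exact_mod_cast h
    rw [Nat.find_eq_iff] at hfk
    exact ⟨hfk.1, fun i hi => hfk.2 i hi⟩
  · rintro ⟨h1, h2⟩
    have hex : ∃ n, ω n ∈ B := ⟨k, h1⟩
    rw [hitTime_eq_find hex]
    have : Nat.find hex = k := (Nat.find_eq_iff hex).mpr ⟨h1, fun i hi => h2 i hi⟩
    exact_mod_cast this

lemma measurable_hitTime {B : Set E} (hB : MeasurableSet B) :
    Measurable (hitTime B : (ℕ → E) → ℕ∞) := by
  apply measurable_to_countable'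
  intro y
  cases y using ENat.recTopCoe with
  | top =>
    have : (hitTime B : (ℕ → E) → ℕ∞) ⁻¹' {⊤} = ⋂ n, (fun ω : ℕ → E => ω n) ⁻¹' Bᶜ := by
      ext ω
      simp [hitTime_eq_top_iff]
    rw [this]
    exact MeasurableSet.iInter fun n => measurable_pi_apply n hB.compl
  | coe k =>
    have : (hitTime B : (ℕ → E) → ℕ∞) ⁻¹' {(k : ℕ∞)}
        = ((fun ω : ℕ → E => ω k) ⁻¹' B) ∩ ⋂ (i : ℕ), ⋂ (_ : i < k), (fun ω : ℕ → E => ω i) ⁻¹' Bᶜ := by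
      ext ω
      simp [hitTime_eq_coe_iff]
    rw [this]
    exact (measurable_pi_apply k hB).inter (MeasurableSet.iInter fun i => MeasurableSet.iInter fun _ => measurable_pi_apply i hB.compl)

end Path

section Path2

variable {E : Type*} [MeasurableSpace E]

lemma measurable_eval_at {g : (ℕ → E) → ℕ} (hg : Measurable g) :
    Measurable fun ω : ℕ → E => ω (g ω) := by
  intro t ht
  have hrw : (fun ω : ℕ → E => ω (g ω)) ⁻¹' t = ⋃ i, (g ⁻¹' {i}) ∩ ((fun ω : ℕ → E => ω i) ⁻¹' t) := by
    ext ω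
    simp only [Set.mem_preimage, Set.mem_iUnion, Set.mem_inter_iff, Set.mem_singleton_iff]
    constructor
    · intro h
      exact ⟨g ω, rfl, h⟩
    · rintro ⟨i, hi, h⟩
      rw [hi]
      exact h
  rw [hrw]
  exact MeasurableSet.iUnion fun i => (hg (measurableSet_singleton i)).inter (measurable_pi_apply i ht)

lemma measurable_tauR {R R1 : Set E} (hR : MeasurableSet R) (hR1 : MeasurableSet R1) :
    Measurable (tauR R R1) := by
  have h1 : Measurable fun ω : ℕ → E => hitTime R1ᶜ ω := measurable_hitTime hR1.compl
  have htn : Measurable fun ω : ℕ → E => (hitTime R1ᶜ ω).toNat :=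
    (measurable_of_countable ENat.toNat).comp h1
  have hshift : Measurable fun ω : ℕ → E => (fun n => ω ((hitTime R1ᶜ ω).toNat + n)) := by
    apply measurable_pi_lambda
    intro n
    exact measurable_eval_at ((measurable_of_countable (· + n)).comp htn)
  have h2 : Measurable fun ω : ℕ → E => hitTime R (fun n => ω ((hitTime R1ᶜ ω).toNat + n)) :=
    (measurable_hitTime hR).comp hshift
  show Measurable fun ω => hitTime R1ᶜ ω + hitTime R (fun n => ω ((hitTime R1ᶜ ω).toNat + n))
  exact (measurable_of_countable (fun p : ℕ∞ × ℕ∞ => p.1 + p.2)).comp (h1.prodMk h2)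

lemma measurable_posTau {R R1 : Set E} (hR : MeasurableSet R) (hR1 : MeasurableSet R1) :
    Measurable fun ω : ℕ → E => ω ((tauR R R1 ω).toNat) :=
  measurable_eval_at ((measurable_of_countable ENat.toNat).comp (measurable_tauR hR hR1))

lemma pos_mem_of_tauR_ne_top {R R1 : Set E} {ω : ℕ → E} (h : tauR R R1 ω ≠ ⊤) :
    ω ((tauR R R1 ω).toNat) ∈ R := by
  have h1 : hitTime R1ᶜ ω ≠ ⊤ := by
    intro h'
    exact h (by simp [tauR, h'])
  have h2 : hitTime R (fun n => ω ((hitTime R1ᶜ ω).toNat + n)) ≠ ⊤ := by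
    intro h'
    exact h (by simp [tauR, h'])
  obtain ⟨j, hj⟩ := WithTop.ne_top_iff_exists.mp h1
  obtain ⟨k, hk⟩ := WithTop.ne_top_iff_exists.mp h2
  have htn : (hitTime R1ᶜ ω).toNat = j := by rw [← hj]; rfl
  have hτ : tauR R R1 ω = ((j + k : ℕ) : ℕ∞) := by
    rw [tauR, ← hk, ← hj]
    push_cast
    rfl
  have hmem := (hitTime_eq_coe_iff.mp hk.symm).1
  simp only [htn] at hmem
  rw [hτ]
  exact hmem

lemma hitTime_congr {B : Set E} {ω ω' : ℕ → E} {m j : ℕ} (hagree : ∀ i ≤ m, ω i = ω' i)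
    (hj : j ≤ m) (h : hitTime B ω = (j : ℕ∞)) : hitTime B ω' = (j : ℕ∞) := by
  rw [hitTime_eq_coe_iff] at h ⊢
  refine ⟨hagree j hj ▸ h.1, fun i hi => ?_⟩
  exact hagree i (le_of_lt (lt_of_lt_of_le hi hj)) ▸ h.2 i hi

lemma toNat_le_of_le {τ : ℕ∞} {m : ℕ} (h : τ ≤ (m : ℕ∞)) : τ.toNat ≤ m := by
  have hne : τ ≠ ⊤ := ne_top_of_le_ne_top (WithTop.coe_ne_top) h
  obtain ⟨j, hj⟩ := WithTop.ne_top_iff_exists.mp hne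
  rw [← hj] at h ⊢
  exact WithTop.coe_le_coe.mp h

lemma tauR_congr {R R1 : Set E} {ω ω' : ℕ → E} {m : ℕ}
    (hagree : ∀ i ≤ m, ω i = ω' i) (h : tauR R R1 ω ≤ (m : ℕ∞)) :
    tauR R R1 ω' = tauR R R1 ω := by
  have hne : tauR R R1 ω ≠ ⊤ := ne_top_of_le_ne_top (WithTop.coe_ne_top) h
  have h1 : hitTime R1ᶜ ω ≠ ⊤ := by
    intro h'
    exact hne (by simp [tauR, h'])
  have h2 : hitTime R (fun n => ω ((hitTime R1ᶜ ω).toNat + n)) ≠ ⊤ := by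
    intro h'
    exact hne (by simp [tauR, h'])
  obtain ⟨j, hj⟩ := WithTop.ne_top_iff_exists.mp h1
  obtain ⟨k, hk⟩ := WithTop.ne_top_iff_exists.mp h2
  have htn : (hitTime R1ᶜ ω).toNat = j := by rw [← hj]; rfl
  have hτ : tauR R R1 ω = ((j + k : ℕ) : ℕ∞) := by
    rw [tauR, ← hk, ← hj]
    push_cast
    rfl
  have hsum : j + k ≤ m := by
    rw [hτ] at h
    exact_mod_cast h
  have hjm : j ≤ m := le_trans (Nat.le_add_right _ _) hsum
  have hj' : hitTime R1ᶜ ω' = (j : ℕ∞) := hitTime_congr hagree hjm hj.symm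
  have htn' : (hitTime R1ᶜ ω').toNat = j := by rw [hj']; rfl
  have hkk := hitTime_eq_coe_iff.mp hk.symm
  have hk' : hitTime R (fun n => ω' ((hitTime R1ᶜ ω').toNat + n)) = (k : ℕ∞) := by
    rw [hitTime_eq_coe_iff]
    constructor
    · have hmem := hkk.1
      simp only [htn] at hmem
      simp only [htn']
      exact hagree (j + k) hsum ▸ hmem
    · intro i hi
      have hmem := hkk.2 i hi
      simp only [htn] at hmem
      simp only [htn']
      exact hagree (j + i) (le_trans (by omega) hsum) ▸ hmem
  have hτ' : tauR R R1 ω' = ((j + k : ℕ) : ℕ∞) := by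
    rw [tauR, hk', hj']
    push_cast
    rfl
  rw [hτ', hτ]

def pathProj (E : Type*) (m : ℕ) : (ℕ → E) → (Fin m → E) := fun ω i => ω i

lemma measurable_pathProj {m : ℕ} : Measurable (pathProj E m) := by
  unfold pathProj
  exact measurable_pi_lambda _ fun i => measurable_pi_apply _

def pathExtend (m : ℕ) : (Fin (m + 1) → E) → (ℕ → E) :=
  fun v n => v ⟨min n m, Nat.lt_succ_of_le (min_le_right n m)⟩

lemma measurable_pathExtend {m : ℕ} : Measurable (pathExtend (E := E) m) := by
  unfold pathExtend
  exact measurable_pi_lambda _ fun n => measurable_pi_apply _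

lemma pathExtend_proj_agree (m : ℕ) (ω : ℕ → E) :
    ∀ i ≤ m, pathExtend m (pathProj E (m + 1) ω) i = ω i := by
  intro i hi
  simp only [pathExtend, pathProj]
  congr 1
  exact min_eq_left hi

lemma tset_eq_preimage (R R1 : Set E) (m : ℕ) (B : Set E) :
    {ω : ℕ → E | tauR R R1 ω ≤ (m : ℕ∞) ∧ ω ((tauR R R1 ω).toNat) ∈ B}
      = pathProj E (m + 1) ⁻¹' (pathExtend m ⁻¹'
          {ω : ℕ → E | tauR R R1 ω ≤ (m : ℕ∞) ∧ ω ((tauR R R1 ω).toNat) ∈ B}) := by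
  ext ω
  simp only [Set.mem_preimage, Set.mem_setOf_eq]
  have hagree : ∀ i ≤ m, pathExtend m (pathProj E (m + 1) ω) i = ω i :=
    pathExtend_proj_agree m ω
  constructor
  · rintro ⟨h1, h2⟩
    have heq : tauR R R1 (pathExtend m (pathProj E (m + 1) ω)) = tauR R R1 ω :=
      tauR_congr (fun i hi => (hagree i hi).symm) h1
    refine ⟨heq ▸ h1, ?_⟩
    rw [heq, hagree _ (toNat_le_of_le h1)]
    exact h2
  · rintro ⟨h1, h2⟩
    have heq : tauR R R1 ω = tauR R R1 (pathExtend m (pathProj E (m + 1) ω)) :=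
      tauR_congr hagree h1
    refine ⟨heq ▸ h1, ?_⟩
    rw [heq]
    rw [← hagree _ (toNat_le_of_le h1)]
    exact h2

end Path2

section MoreAux

variable {E : Type*} [MeasurableSpace E]

lemma eDist_le_ofReal_tvDist {μ ν : Measure E} [IsProbabilityMeasure μ]
    [IsProbabilityMeasure ν] : eDist μ ν ≤ ENNReal.ofReal (tvDist μ ν) := by
  refine eDist_le fun B hB => ?_
  have hbdd : BddAbove (Set.range fun B : {B : Set E // MeasurableSet B} =>
      |(μ B.1).toReal - (ν B.1).toReal|) := by
    refine ⟨1, ?_⟩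
    rintro r ⟨C, rfl⟩
    have h1 : (μ C.1).toReal ≤ 1 := by
      simpa using ENNReal.toReal_mono ENNReal.one_ne_top (prob_le_one (μ := μ))
    have h2 : (ν C.1).toReal ≤ 1 := by
      simpa using ENNReal.toReal_mono ENNReal.one_ne_top (prob_le_one (μ := ν))
    have h3 : (0:ℝ) ≤ (μ C.1).toReal := ENNReal.toReal_nonneg
    have h4 : (0:ℝ) ≤ (ν C.1).toReal := ENNReal.toReal_nonneg
    rw [abs_sub_le_iff]
    constructor <;> linarith
  have hle : |(μ B).toReal - (ν B).toReal| ≤ tvDist μ ν :=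
    le_ciSup hbdd (⟨B, hB⟩ : {B : Set E // MeasurableSet B})
  have hnetop : (μ B - ν B) ⊔ (ν B - μ B) ≠ ⊤ :=
    ne_top_of_le_ne_top ENNReal.one_ne_top
      (sup_le (tsub_le_self.trans (prob_le_one (μ := μ)))
        (tsub_le_self.trans (prob_le_one (μ := ν))))
  calc (μ B - ν B) ⊔ (ν B - μ B)
      = ENNReal.ofReal (((μ B - ν B) ⊔ (ν B - μ B)).toReal) :=
        (ENNReal.ofReal_toReal hnetop).symm
    _ = ENNReal.ofReal |(μ B).toReal - (ν B).toReal| := by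
        rw [abs_toReal_sub (measure_ne_top μ B) (measure_ne_top ν B)]
    _ ≤ ENNReal.ofReal (tvDist μ ν) := ENNReal.ofReal_le_ofReal hle

lemma eDist_eq_zero_of_subsingleton {γ : Type*} [MeasurableSpace γ] [Subsingleton γ]
    (μ ν : Measure γ) [IsProbabilityMeasure μ] [IsProbabilityMeasure ν] :
    eDist μ ν = 0 := by
  refine le_antisymm (eDist_le fun B hB => ?_) zero_le
  rcases Set.eq_empty_or_nonempty B with rfl | hBne
  · simp
  · have hBuniv : B = Set.univ := by
      obtain ⟨x, hx⟩ := hBne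
      refine Set.eq_univ_of_forall fun y => ?_
      rwa [Subsingleton.elim y x]
    rw [hBuniv]
    simp [measure_univ]

lemma measurable_prepend (x : E) : Measurable (prepend (E := E) x) := by
  apply measurable_pi_lambda
  intro n
  cases n with
  | zero => exact measurable_const
  | succ k => exact measurable_pi_apply k

lemma map_bind' {α β γ : Type*} [MeasurableSpace α] [MeasurableSpace β] [MeasurableSpace γ]
    (μ : Measure α) {f : α → Measure β} (hf : Measurable f) {g : β → γ} (hg : Measurable g) :
    (μ.bind f).map g = μ.bind fun a => (f a).map g := by
  ext s hs
  have hmf : Measurable fun a => (f a).map g := (Measure.measurable_map g hg).comp hf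
  rw [Measure.map_apply hg hs, Measure.bind_apply (hg hs) hf.aemeasurable, Measure.bind_apply hs hmf.aemeasurable]
  exact lintegral_congr fun a => (Measure.map_apply hg hs).symm

lemma measurable_finCons {m : ℕ} (x : E) :
    Measurable fun (v : Fin m → E) => (Fin.cons x v : Fin (m + 1) → E) := by
  apply measurable_pi_lambda
  intro i
  refine Fin.cases ?_ ?_ i
  · simp only [Fin.cons_zero]
    exact measurable_const
  · intro j
    simp only [Fin.cons_succ]
    exact measurable_pi_apply j

lemma proj_succ_of_pathlaw {Q : Kernel E E} {Pl : E → Measure (ℕ → E)}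
    (h : IsPathLaw Q Pl) (m : ℕ) (x : E) :
    (Pl x).map (pathProj E (m + 1))
      = ((Q x).bind fun y => (Pl y).map (pathProj E m)).map (Fin.cons x) := by
  conv_lhs => rw [h.2.2 x]
  rw [Measure.map_map measurable_pathProj (measurable_prepend x)]
  have hfun : (pathProj E (m + 1)) ∘ (prepend x) = (Fin.cons x) ∘ (pathProj E m) := by
    funext ω i
    refine Fin.cases ?_ ?_ i
    · simp [pathProj, prepend, Fin.cons_zero]
    · intro j
      simp [pathProj, prepend, Fin.cons_succ]
  rw [hfun, ← Measure.map_map (measurable_finCons x) measurable_pathProj,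
    map_bind' _ h.1 measurable_pathProj]

lemma embMeas_apply {R R1 : Set E} (hR : MeasurableSet R) (hR1 : MeasurableSet R1)
    (Pl : E → Measure (ℕ → E)) (x : E) {B : Set E} (hB : MeasurableSet B) :
    embMeas R R1 Pl x B
      = Pl x ((fun ω : ℕ → E => ω ((tauR R R1 ω).toNat)) ⁻¹' B ∩ {ω | tauR R R1 ω ≠ ⊤}) := by
  unfold embMeas
  rw [Measure.map_apply (measurable_posTau hR hR1) hB,
    Measure.restrict_apply (measurable_posTau hR hR1 hB)]

lemma embMeas_univ_le {R R1 : Set E} (hR : MeasurableSet R) (hR1 : MeasurableSet R1)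
    (Pl : E → Measure (ℕ → E)) (x : E) (h : IsProbabilityMeasure (Pl x)) :
    embMeas R R1 Pl x Set.univ ≤ 1 := by
  rw [embMeas_apply hR hR1 Pl x MeasurableSet.univ]
  exact (measure_mono (Set.subset_univ _)).trans measure_univ.le

lemma measurable_embMeas {R R1 : Set E} (hR : MeasurableSet R) (hR1 : MeasurableSet R1)
    {Pl : E → Measure (ℕ → E)} (hPl : Measurable Pl) :
    Measurable (embMeas R R1 Pl) := by
  rw [Measure.measurable_measure]
  intro s hs
  have : ∀ x, embMeas R R1 Pl x s
      = Pl x ((fun ω : ℕ → E => ω ((tauR R R1 ω).toNat)) ⁻¹' s ∩ {ω | tauR R R1 ω ≠ ⊤}) :=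
    fun x => embMeas_apply hR hR1 Pl x hs
  simp_rw [this]
  have hSmeas : MeasurableSet {ω : ℕ → E | tauR R R1 ω ≠ ⊤} :=
    (measurable_tauR hR hR1) (measurableSet_singleton ⊤).compl
  exact (Measure.measurable_coe ((measurable_posTau hR hR1 hs).inter hSmeas)).comp hPl

lemma embMeas_compl_R {R R1 : Set E} (hR : MeasurableSet R) (hR1 : MeasurableSet R1)
    (Pl : E → Measure (ℕ → E)) (x : E) :
    embMeas R R1 Pl x Rᶜ = 0 := by
  rw [embMeas_apply hR hR1 Pl x hR.compl]
  have hempty : ((fun ω : ℕ → E => ω ((tauR R R1 ω).toNat)) ⁻¹' Rᶜ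
      ∩ {ω | tauR R R1 ω ≠ ⊤}) = ∅ := by
    rw [Set.eq_empty_iff_forall_notMem]
    rintro ω ⟨h1, h2⟩
    exact h1 (pos_mem_of_tauR_ne_top h2)
  rw [hempty, measure_empty]

lemma tail_bound {R R1 : Set E} (hR : MeasurableSet R) (hR1 : MeasurableSet R1)
    (μ : Measure (ℕ → E)) {C : ℝ≥0∞}
    (hint : ∫⁻ ω, ((tauR R R1 ω : ℝ≥0∞)) ^ 2 ∂μ ≤ C) (m : ℕ) :
    μ {ω | ¬ tauR R R1 ω ≤ (m : ℕ∞)} ≤ C / (((m + 1 : ℕ) : ℝ≥0∞)) ^ 2 := by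
  have hmeas : Measurable fun ω : ℕ → E => ((tauR R R1 ω : ℝ≥0∞)) ^ 2 :=
    ((measurable_of_countable (fun t : ℕ∞ => (t : ℝ≥0∞))).comp
      (measurable_tauR hR hR1)).pow_const 2
  have hsub : {ω : ℕ → E | ¬ tauR R R1 ω ≤ (m : ℕ∞)}
      ⊆ {ω : ℕ → E | (((m + 1 : ℕ) : ℝ≥0∞)) ^ 2 ≤ ((tauR R R1 ω : ℝ≥0∞)) ^ 2} := by
    intro ω hω
    have h1 : (m : ℕ∞) + 1 ≤ tauR R R1 ω := Order.add_one_le_of_lt (not_le.mp hω)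
    have h2 : (((m + 1 : ℕ)) : ℕ∞) ≤ tauR R R1 ω := by
      push_cast
      exact h1
    have h3 : (((m + 1 : ℕ)) : ℝ≥0∞) ≤ ((tauR R R1 ω : ℕ∞) : ℝ≥0∞) := by
      calc (((m + 1 : ℕ)) : ℝ≥0∞) = ((((m + 1 : ℕ) : ℕ∞)) : ℝ≥0∞) := by simp
        _ ≤ _ := ENat.toENNReal_le.mpr h2
    exact pow_le_pow_left' h3 2
  have hε0 : (((m + 1 : ℕ) : ℝ≥0∞)) ^ 2 ≠ 0 := by positivity
  have hεtop : (((m + 1 : ℕ) : ℝ≥0∞)) ^ 2 ≠ ⊤ := by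
    exact ENNReal.pow_ne_top (ENNReal.natCast_ne_top _)
  rw [ENNReal.le_div_iff_mul_le (Or.inl hε0) (Or.inl hεtop)]
  calc μ {ω | ¬ tauR R R1 ω ≤ (m : ℕ∞)} * (((m + 1 : ℕ) : ℝ≥0∞)) ^ 2
      = (((m + 1 : ℕ) : ℝ≥0∞)) ^ 2 * μ {ω | ¬ tauR R R1 ω ≤ (m : ℕ∞)} := mul_comm _ _
    _ ≤ (((m + 1 : ℕ) : ℝ≥0∞)) ^ 2
        * μ {ω : ℕ → E | (((m + 1 : ℕ) : ℝ≥0∞)) ^ 2 ≤ ((tauR R R1 ω : ℝ≥0∞)) ^ 2} :=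
        mul_le_mul_right (measure_mono hsub) _
    _ ≤ ∫⁻ ω, ((tauR R R1 ω : ℝ≥0∞)) ^ 2 ∂μ :=
        mul_meas_ge_le_lintegral₀ hmeas.aemeasurable _
    _ ≤ C := hint

lemma measurable_mIter {Pi0 : E → Measure E} (h : Measurable Pi0) (k : ℕ) :
    Measurable (mIter Pi0 k) := by
  induction k with
  | zero =>
    show Measurable fun x : E => Measure.dirac x
    exact Measure.measurable_dirac
  | succ k ih =>
    show Measurable fun x : E => (Pi0 x).bind (mIter Pi0 k)
    exact (Measure.measurable_bind' ih).comp h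

lemma mIter_univ_le {Pi0 : E → Measure E} (h : Measurable Pi0)
    (hs : ∀ y, Pi0 y Set.univ ≤ 1) (k : ℕ) (y : E) : mIter Pi0 k y Set.univ ≤ 1 := by
  induction k generalizing y with
  | zero =>
    show Measure.dirac y Set.univ ≤ 1
    simp
  | succ k ih =>
    show (Pi0 y).bind (mIter Pi0 k) Set.univ ≤ 1
    rw [Measure.bind_apply MeasurableSet.univ (measurable_mIter h k).aemeasurable]
    calc ∫⁻ z, mIter Pi0 k z Set.univ ∂Pi0 y ≤ ∫⁻ _, 1 ∂Pi0 y := lintegral_mono fun z => ih z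
      _ = Pi0 y Set.univ := lintegral_one
      _ ≤ 1 := hs y

lemma ennreal_squeeze_zero {f g : ℕ → ℝ≥0∞} (hle : ∀ n, f n ≤ g n)
    (hg : Tendsto g atTop (nhds 0)) : Tendsto f atTop (nhds 0) := by
  rw [ENNReal.tendsto_atTop_zero] at hg ⊢
  intro ε hε
  obtain ⟨N, hN⟩ := hg ε hε
  exact ⟨N, fun n hn => (hle n).trans (hN n hn)⟩

lemma mIter_one {Pi0 : E → Measure E} (y : E) : mIter Pi0 1 y = Pi0 y := by
  show (Pi0 y).bind (mIter Pi0 0) = Pi0 y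
  have h0 : mIter Pi0 0 = Measure.dirac := rfl
  rw [h0, Measure.bind_dirac]

lemma mIter_succ (Pi0 : E → Measure E) (k : ℕ) (y : E) :
    mIter Pi0 (k + 1) y = (Pi0 y).bind (mIter Pi0 k) := rfl

end MoreAux

/-- Corollary 3: under (EC) and total variation convergence of the
controlled kernels along `u_n → u`, the iterates of the embedded kernels converge in
total variation on Borel subsets of `R`, for every `k ≥ 1` and `x ∈ R`. -/
theorem stmt16 {E U : Type*} [MetricSpace E] [PolishSpace E]
    [MeasurableSpace E] [BorelSpace E]
    [MetricSpace U] [CompactSpace U] [MeasurableSpace U] [BorelSpace U]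
    (P : Kernel (E × U) E) [IsMarkovKernel P]
    -- two concentric closed balls R ⊆ R₁
    (z : E) (r r1 : ℝ) (hr : r ≤ r1)
    (R R1 : Set E) (hR : R = Metric.closedBall z r) (hR1 : R1 = Metric.closedBall z r1)
    (un : ℕ → E → U) (u : E → U)
    (hun : ∀ n, Measurable (un n)) (hu : Measurable u)
    (hconv : ∀ x, Tendsto (fun n => un n x) atTop (nhds (u x)))
    (htv : ∀ x, Tendsto
      (fun n => tvDist (Qctrl P (un n) (hun n) x) (Qctrl P u hu x)) atTop (nhds 0))
    -- the path laws of the controlled chains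
    (Pln : ℕ → E → Measure (ℕ → E)) (Plu : E → Measure (ℕ → E))
    (hPln : ∀ n, IsPathLaw (Qctrl P (un n) (hun n)) (Pln n))
    (hPlu : IsPathLaw (Qctrl P u hu) Plu)
    -- (EC)
    (hEC : ∃ C : ℝ≥0∞, C ≠ ⊤ ∧ ∀ x ∈ R,
      (∀ n, ∫⁻ ω, ((tauR R R1 ω : ℝ≥0∞)) ^ 2 ∂ (Pln n x) ≤ C) ∧
      ∫⁻ ω, ((tauR R R1 ω : ℝ≥0∞)) ^ 2 ∂ (Plu x) ≤ C) :
    ∀ k : ℕ, 1 ≤ k → ∀ x ∈ R,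
      Tendsto (fun n => ⨆ B : {B : Set E // MeasurableSet B ∧ B ⊆ R},
          |(mIter (embMeas R R1 (Pln n)) k x B.1).toReal -
            (mIter (embMeas R R1 Plu) k x B.1).toReal|)
        atTop (nhds 0) := by
  classical
  obtain ⟨C, hCne, hC⟩ := hEC
  have hRmeas : MeasurableSet R := by rw [hR]; exact Metric.isClosed_closedBall.measurableSet
  have hR1meas : MeasurableSet R1 := by rw [hR1]; exact Metric.isClosed_closedBall.measurableSet
  have hQu : ∀ y : E, IsProbabilityMeasure ((Qctrl P u hu) y) := fun y => by
    simp only [Qctrl, Kernel.comap_apply]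
    infer_instance
  have hQn : ∀ n (y : E), IsProbabilityMeasure ((Qctrl P (un n) (hun n)) y) := fun n y => by
    simp only [Qctrl, Kernel.comap_apply]
    infer_instance
  -- Step A: total variation convergence of the laws of the first m coordinates
  have stepA : ∀ m : ℕ, ∀ x : E, Tendsto (fun n =>
      eDist ((Pln n x).map (pathProj E m)) ((Plu x).map (pathProj E m))) atTop (nhds 0) := by
    intro m
    induction m with
    | zero =>
      intro x
      have hzero : ∀ n, eDist ((Pln n x).map (pathProj E 0)) ((Plu x).map (pathProj E 0)) = 0 := by
        intro n
        haveI := (hPln n).2.1 x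
        haveI := hPlu.2.1 x
        haveI : IsProbabilityMeasure ((Pln n x).map (pathProj E 0)) :=
          Measure.isProbabilityMeasure_map measurable_pathProj.aemeasurable
        haveI : IsProbabilityMeasure ((Plu x).map (pathProj E 0)) :=
          Measure.isProbabilityMeasure_map measurable_pathProj.aemeasurable
        exact eDist_eq_zero_of_subsingleton _ _
      have hfun : (fun n => eDist ((Pln n x).map (pathProj E 0)) ((Plu x).map (pathProj E 0)))
          = fun _ => (0 : ℝ≥0∞) := funext hzero
      rw [hfun]
      exact tendsto_const_nhds
    | succ m ih =>
      intro x
      haveI := hQu x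
      have hGn : ∀ n, Measurable fun y => (Pln n y).map (pathProj E m) := fun n =>
        (Measure.measurable_map _ measurable_pathProj).comp (hPln n).1
      have hGu : Measurable fun y => (Plu y).map (pathProj E m) :=
        (Measure.measurable_map _ measurable_pathProj).comp hPlu.1
      have hfinGn : ∀ n y, IsFiniteMeasure ((Pln n y).map (pathProj E m)) := by
        intro n y
        haveI := (hPln n).2.1 y
        haveI := Measure.isProbabilityMeasure_map
          (μ := Pln n y) (measurable_pathProj (E := E) (m := m)).aemeasurable
        infer_instance
      have hfinGu : ∀ y, IsFiniteMeasure ((Plu y).map (pathProj E m)) := by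
        intro y
        haveI := hPlu.2.1 y
        haveI := Measure.isProbabilityMeasure_map
          (μ := Plu y) (measurable_pathProj (E := E) (m := m)).aemeasurable
        infer_instance
      have hprobGn : ∀ n y, IsProbabilityMeasure ((Pln n y).map (pathProj E m)) := by
        intro n y
        haveI := (hPln n).2.1 y
        exact Measure.isProbabilityMeasure_map (measurable_pathProj (m := m)).aemeasurable
      have hprobGu : ∀ y, IsProbabilityMeasure ((Plu y).map (pathProj E m)) := by
        intro y
        haveI := hPlu.2.1 y
        exact Measure.isProbabilityMeasure_map (measurable_pathProj (m := m)).aemeasurable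
      have hbnd : ∀ n, eDist ((Pln n x).map (pathProj E (m + 1)))
            ((Plu x).map (pathProj E (m + 1)))
          ≤ ENNReal.ofReal (tvDist ((Qctrl P (un n) (hun n)) x) ((Qctrl P u hu) x))
            + ∫⁻ y, eDist ((Pln n y).map (pathProj E m)) ((Plu y).map (pathProj E m))
                ∂((Qctrl P u hu) x) := by
        intro n
        haveI := hQn n x
        rw [proj_succ_of_pathlaw (hPln n) m x, proj_succ_of_pathlaw hPlu m x]
        refine ((eDist_map_le (measurable_finCons x)).trans
          (eDist_bind_le (hGn n) hGu ?_)).trans ?_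
        · intro y
          haveI := hprobGn n y
          exact measure_univ.le
        · refine add_le_add_left ?_ _
          exact eDist_le_ofReal_tvDist
      have h1 : Tendsto (fun n => ENNReal.ofReal
          (tvDist ((Qctrl P (un n) (hun n)) x) ((Qctrl P u hu) x))) atTop (nhds 0) := by
        have h := ENNReal.tendsto_ofReal (htv x)
        simpa using h
      have h2 : Tendsto (fun n => ∫⁻ y, eDist ((Pln n y).map (pathProj E m))
          ((Plu y).map (pathProj E m)) ∂((Qctrl P u hu) x)) atTop (nhds 0) := by
        have hmeasn : ∀ n, Measurable fun y =>
            eDist ((Pln n y).map (pathProj E m)) ((Plu y).map (pathProj E m)) := fun n =>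
          measurable_eDist _ _ (hGn n) hGu (hfinGn n) hfinGu
        have hbound : ∀ n, (fun y => eDist ((Pln n y).map (pathProj E m))
            ((Plu y).map (pathProj E m))) ≤ᵐ[(Qctrl P u hu) x] fun _ => 1 := by
          intro n
          refine Filter.Eventually.of_forall fun y => ?_
          haveI := hprobGn n y
          haveI := hprobGu y
          exact eDist_le_one measure_univ.le measure_univ.le
        have hlim : ∀ᵐ (y : E) ∂((Qctrl P u hu) x), Tendsto (fun n =>
            eDist ((Pln n y).map (pathProj E m)) ((Plu y).map (pathProj E m)))
            atTop (nhds 0) := Filter.Eventually.of_forall fun y => ih y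
        have hdct := tendsto_lintegral_of_dominated_convergence (μ := (Qctrl P u hu) x)
          (fun _ => 1) hmeasn hbound (by simp) hlim
        simpa using hdct
      have hsum := h1.add h2
      rw [add_zero] at hsum
      exact ennreal_squeeze_zero hbnd hsum
  -- Step B: total variation convergence of the embedded kernels
  have stepB : ∀ x ∈ R, Tendsto (fun n =>
      eDist (embMeas R R1 (Pln n) x) (embMeas R R1 Plu x)) atTop (nhds 0) := by
    intro x hx
    rw [ENNReal.tendsto_atTop_zero]
    intro ε hε
    have hε2 : (0 : ℝ≥0∞) < ε / 2 := ENNReal.half_pos hε.ne'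
    have hε4 : (0 : ℝ≥0∞) < ε / 2 / 2 := ENNReal.half_pos hε2.ne'
    obtain ⟨m, hm⟩ : ∃ m : ℕ, C / (((m + 1 : ℕ) : ℝ≥0∞)) ^ 2 ≤ ε / 2 / 2 := by
      rcases eq_or_ne (ε / 2 / 2) ⊤ with h4 | h4
      · exact ⟨0, by rw [h4]; exact le_top⟩
      · obtain ⟨N, hN⟩ := ENNReal.exists_nat_gt (ENNReal.div_lt_top hCne hε4.ne').ne
        refine ⟨N, ?_⟩
        have hCle : C ≤ (ε / 2 / 2) * N := by
          rw [ENNReal.div_lt_iff (Or.inl hε4.ne') (Or.inl h4)] at hN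
          calc C ≤ (N : ℝ≥0∞) * (ε / 2 / 2) := hN.le
            _ = (ε / 2 / 2) * N := mul_comm _ _
        rw [ENNReal.div_le_iff_le_mul
          (Or.inl (by positivity)) (Or.inl (ENNReal.pow_ne_top (ENNReal.natCast_ne_top _)))]
        have hcast : ((N : ℕ) : ℝ≥0∞) ≤ (((N + 1 : ℕ)) : ℝ≥0∞) ^ 2 := by
          have hN2 : N ≤ (N + 1) ^ 2 := by nlinarith
          calc ((N : ℕ) : ℝ≥0∞) ≤ ((((N + 1) ^ 2 : ℕ)) : ℝ≥0∞) := by exact_mod_cast hN2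
            _ = (((N + 1 : ℕ)) : ℝ≥0∞) ^ 2 := by push_cast; ring
        calc C ≤ (ε / 2 / 2) * N := hCle
          _ ≤ (ε / 2 / 2) * (((N + 1 : ℕ)) : ℝ≥0∞) ^ 2 := mul_le_mul_right hcast _
    obtain ⟨N0, hN0⟩ := (ENNReal.tendsto_atTop_zero.mp (stepA (m + 1) x)) (ε / 2) hε2
    refine ⟨N0, fun n hn => ?_⟩
    have hbound : eDist (embMeas R R1 (Pln n) x) (embMeas R R1 Plu x)
        ≤ eDist ((Pln n x).map (pathProj E (m + 1))) ((Plu x).map (pathProj E (m + 1)))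
          + (ε / 2 / 2 + ε / 2 / 2) := by
      refine eDist_le fun B hB => ?_
      set T := {ω : ℕ → E | tauR R R1 ω ≤ (m : ℕ∞) ∧ ω ((tauR R R1 ω).toNat) ∈ B} with hTdef
      have hTmeas : MeasurableSet T := by
        have hTeq : T = (tauR R R1 ⁻¹' {t : ℕ∞ | t ≤ (m : ℕ∞)})
            ∩ ((fun ω : ℕ → E => ω ((tauR R R1 ω).toNat)) ⁻¹' B) := rfl
        rw [hTeq]
        exact ((measurable_tauR hRmeas hR1meas) ((Set.to_countable _).measurableSet)).inter
          ((measurable_posTau hRmeas hR1meas) hB)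
      set S := pathExtend m ⁻¹' T with hSdef
      have hSmeas : MeasurableSet S := measurable_pathExtend hTmeas
      have hTS : T = pathProj E (m + 1) ⁻¹' S := tset_eq_preimage R R1 m B
      set W := ((fun ω : ℕ → E => ω ((tauR R R1 ω).toNat)) ⁻¹' B ∩ {ω | tauR R R1 ω ≠ ⊤})
        with hWset
      have hTW : T ⊆ W := by
        rintro ω ⟨h1, h2⟩
        exact ⟨h2, ne_top_of_le_ne_top WithTop.coe_ne_top h1⟩
      have hWT : W \ T ⊆ {ω : ℕ → E | ¬ tauR R R1 ω ≤ (m : ℕ∞)} := by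
        rintro ω ⟨⟨hpos, _⟩, hnT⟩ hτ
        exact hnT ⟨hτ, hpos⟩
      have hsplit : W ⊆ T ∪ (W \ T) := by
        intro ω hω
        by_cases hT : ω ∈ T
        · exact Set.mem_union_left _ hT
        · exact Set.mem_union_right _ ⟨hω, hT⟩
      have hTn : Pln n x T = ((Pln n x).map (pathProj E (m + 1))) S := by
        rw [Measure.map_apply measurable_pathProj hSmeas, ← hTS]
      have hTu : Plu x T = ((Plu x).map (pathProj E (m + 1))) S := by
        rw [Measure.map_apply measurable_pathProj hSmeas, ← hTS]
      have htailn : Pln n x {ω | ¬ tauR R R1 ω ≤ (m : ℕ∞)} ≤ ε / 2 / 2 :=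
        (tail_bound hRmeas hR1meas _ ((hC x hx).1 n) m).trans hm
      have htailu : Plu x {ω | ¬ tauR R R1 ω ≤ (m : ℕ∞)} ≤ ε / 2 / 2 :=
        (tail_bound hRmeas hR1meas _ (hC x hx).2 m).trans hm
      have hWn_le : Pln n x W ≤ Pln n x T + ε / 2 / 2 := by
        calc Pln n x W ≤ Pln n x (T ∪ (W \ T)) := measure_mono hsplit
          _ ≤ Pln n x T + Pln n x (W \ T) := measure_union_le _ _
          _ ≤ Pln n x T + ε / 2 / 2 := add_le_add_right ((measure_mono hWT).trans htailn) _
      have hWu_le : Plu x W ≤ Plu x T + ε / 2 / 2 := by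
        calc Plu x W ≤ Plu x (T ∪ (W \ T)) := measure_mono hsplit
          _ ≤ Plu x T + Plu x (W \ T) := measure_union_le _ _
          _ ≤ Plu x T + ε / 2 / 2 := add_le_add_right ((measure_mono hWT).trans htailu) _
      have hTn_le : Pln n x T ≤ Pln n x W := measure_mono hTW
      have hTu_le : Plu x T ≤ Plu x W := measure_mono hTW
      have hWn : embMeas R R1 (Pln n) x B = Pln n x W := embMeas_apply hRmeas hR1meas _ x hB
      have hWu : embMeas R R1 Plu x B = Plu x W := embMeas_apply hRmeas hR1meas _ x hB
      rw [hWn, hWu]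
      set D := eDist ((Pln n x).map (pathProj E (m + 1))) ((Plu x).map (pathProj E (m + 1)))
        with hD
      have hDn : Pln n x T - Plu x T ≤ D := by
        rw [hTn, hTu]
        exact le_sup_left.trans (apply_le_eDist hSmeas)
      have hDu : Plu x T - Pln n x T ≤ D := by
        rw [hTn, hTu]
        exact le_sup_right.trans (apply_le_eDist hSmeas)
      refine sup_le ?_ ?_
      · calc Pln n x W - Plu x W ≤ (Pln n x T + ε / 2 / 2) - Plu x T :=
            tsub_le_tsub hWn_le hTu_le
          _ ≤ (Pln n x T - Plu x T) + ε / 2 / 2 := by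
              rw [tsub_le_iff_right]
              calc Pln n x T + ε / 2 / 2
                  ≤ ((Pln n x T - Plu x T) + Plu x T) + ε / 2 / 2 :=
                    add_le_add_left le_tsub_add _
                _ = (Pln n x T - Plu x T) + ε / 2 / 2 + Plu x T := by ring
          _ ≤ D + ε / 2 / 2 := add_le_add_left hDn _
          _ ≤ D + (ε / 2 / 2 + ε / 2 / 2) := add_le_add_right le_self_add _
      · calc Plu x W - Pln n x W ≤ (Plu x T + ε / 2 / 2) - Pln n x T :=
            tsub_le_tsub hWu_le hTn_le
          _ ≤ (Plu x T - Pln n x T) + ε / 2 / 2 := by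
              rw [tsub_le_iff_right]
              calc Plu x T + ε / 2 / 2
                  ≤ ((Plu x T - Pln n x T) + Pln n x T) + ε / 2 / 2 :=
                    add_le_add_left le_tsub_add _
                _ = (Plu x T - Pln n x T) + ε / 2 / 2 + Pln n x T := by ring
          _ ≤ D + ε / 2 / 2 := add_le_add_left hDu _
          _ ≤ D + (ε / 2 / 2 + ε / 2 / 2) := add_le_add_right le_self_add _
    calc eDist (embMeas R R1 (Pln n) x) (embMeas R R1 Plu x)
        ≤ eDist ((Pln n x).map (pathProj E (m + 1))) ((Plu x).map (pathProj E (m + 1)))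
          + (ε / 2 / 2 + ε / 2 / 2) := hbound
      _ ≤ ε / 2 + (ε / 2 / 2 + ε / 2 / 2) := add_le_add_left (hN0 n hn) _
      _ = ε / 2 + ε / 2 := by rw [ENNReal.add_halves]
      _ = ε := ENNReal.add_halves ε
  -- measurability and sub-probability facts about the embedded kernels
  have hmeasPin : ∀ n, Measurable (embMeas R R1 (Pln n)) := fun n =>
    measurable_embMeas hRmeas hR1meas (hPln n).1
  have hmeasPiu : Measurable (embMeas R R1 Plu) :=
    measurable_embMeas hRmeas hR1meas hPlu.1
  have hsubPin : ∀ n y, embMeas R R1 (Pln n) y Set.univ ≤ 1 := fun n y =>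
    embMeas_univ_le hRmeas hR1meas _ y ((hPln n).2.1 y)
  have hsubPiu : ∀ y, embMeas R R1 Plu y Set.univ ≤ 1 := fun y =>
    embMeas_univ_le hRmeas hR1meas _ y (hPlu.2.1 y)
  -- Step C: convergence of the iterates
  have stepC : ∀ k : ℕ, 1 ≤ k → ∀ y ∈ R, Tendsto (fun n =>
      eDist (mIter (embMeas R R1 (Pln n)) k y) (mIter (embMeas R R1 Plu) k y))
      atTop (nhds 0) := by
    intro k hk
    induction k, hk using Nat.le_induction with
    | base =>
      intro y hy
      refine (stepB y hy).congr fun n => ?_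
      rw [mIter_one, mIter_one]
    | succ k hk ih =>
      intro y hy
      have hglim : Tendsto (fun n =>
          eDist (embMeas R R1 (Pln n) y) (embMeas R R1 Plu y)
          + ∫⁻ z, eDist (mIter (embMeas R R1 (Pln n)) k z) (mIter (embMeas R R1 Plu) k z)
              ∂(embMeas R R1 Plu y)) atTop (nhds 0) := by
        have hdct : Tendsto (fun n =>
            ∫⁻ z, eDist (mIter (embMeas R R1 (Pln n)) k z) (mIter (embMeas R R1 Plu) k z)
              ∂(embMeas R R1 Plu y)) atTop (nhds 0) := by
          have hmeasn : ∀ n, Measurable fun z =>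
              eDist (mIter (embMeas R R1 (Pln n)) k z) (mIter (embMeas R R1 Plu) k z) := by
            intro n
            refine measurable_eDist _ _ (measurable_mIter (hmeasPin n) k)
              (measurable_mIter hmeasPiu k) ?_ ?_
            · intro z
              exact ⟨(mIter_univ_le (hmeasPin n) (hsubPin n) k z).trans_lt ENNReal.one_lt_top⟩
            · intro z
              exact ⟨(mIter_univ_le hmeasPiu hsubPiu k z).trans_lt ENNReal.one_lt_top⟩
          have hbound : ∀ n, (fun z =>
              eDist (mIter (embMeas R R1 (Pln n)) k z) (mIter (embMeas R R1 Plu) k z))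
              ≤ᵐ[embMeas R R1 Plu y] fun _ => 1 := by
            intro n
            refine Filter.Eventually.of_forall fun z => ?_
            exact eDist_le_one (mIter_univ_le (hmeasPin n) (hsubPin n) k z)
              (mIter_univ_le hmeasPiu hsubPiu k z)
          have hae : ∀ᵐ z ∂(embMeas R R1 Plu y), z ∈ R := by
            rw [ae_iff]
            exact embMeas_compl_R hRmeas hR1meas Plu y
          have hlim : ∀ᵐ z ∂(embMeas R R1 Plu y), Tendsto (fun n =>
              eDist (mIter (embMeas R R1 (Pln n)) k z) (mIter (embMeas R R1 Plu) k z))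
              atTop (nhds 0) := by
            filter_upwards [hae] with z hz using ih z hz
          have hintfin : ∫⁻ _, (1 : ℝ≥0∞) ∂(embMeas R R1 Plu y) ≠ ⊤ := by
            rw [lintegral_one]
            exact ((hsubPiu y).trans_lt ENNReal.one_lt_top).ne
          have hdct' := tendsto_lintegral_of_dominated_convergence
            (μ := embMeas R R1 Plu y) (fun _ => 1) hmeasn hbound hintfin hlim
          simpa using hdct'
        have hsum := (stepB y hy).add hdct
        rwa [add_zero] at hsum
      refine ennreal_squeeze_zero (fun n => ?_) hglim
      rw [mIter_succ, mIter_succ]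
      haveI : IsFiniteMeasure (embMeas R R1 (Pln n) y) :=
        ⟨(hsubPin n y).trans_lt ENNReal.one_lt_top⟩
      haveI : IsFiniteMeasure (embMeas R R1 Plu y) :=
        ⟨(hsubPiu y).trans_lt ENNReal.one_lt_top⟩
      exact eDist_bind_le (measurable_mIter (hmeasPin n) k) (measurable_mIter hmeasPiu k)
        (fun z => mIter_univ_le (hmeasPin n) (hsubPin n) k z)
  -- conclusion
  intro k hk x hx
  have hmain := stepC k hk x hx
  have htoReal : Tendsto (fun n =>
      (eDist (mIter (embMeas R R1 (Pln n)) k x) (mIter (embMeas R R1 Plu) k x)).toReal)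
      atTop (nhds 0) := by
    have h := (ENNReal.tendsto_toReal (a := 0) (by simp)).comp hmain
    exact h
  have hsubn : ∀ n (B : Set E), mIter (embMeas R R1 (Pln n)) k x B ≤ 1 := fun n B =>
    (measure_mono (Set.subset_univ B)).trans (mIter_univ_le (hmeasPin n) (hsubPin n) k x)
  have hsubu : ∀ B : Set E, mIter (embMeas R R1 Plu) k x B ≤ 1 := fun B =>
    (measure_mono (Set.subset_univ B)).trans (mIter_univ_le hmeasPiu hsubPiu k x)
  haveI hnonempty : Nonempty {B : Set E // MeasurableSet B ∧ B ⊆ R} :=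
    ⟨⟨∅, MeasurableSet.empty, Set.empty_subset R⟩⟩
  have hbdd : ∀ n, BddAbove (Set.range fun B : {B : Set E // MeasurableSet B ∧ B ⊆ R} =>
      |(mIter (embMeas R R1 (Pln n)) k x B.1).toReal
        - (mIter (embMeas R R1 Plu) k x B.1).toReal|) := by
    intro n
    refine ⟨2, ?_⟩
    rintro r ⟨B, rfl⟩
    have h1 : (mIter (embMeas R R1 (Pln n)) k x B.1).toReal ≤ 1 := by
      simpa using ENNReal.toReal_mono ENNReal.one_ne_top (hsubn n B.1)
    have h2 : (mIter (embMeas R R1 Plu) k x B.1).toReal ≤ 1 := by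
      simpa using ENNReal.toReal_mono ENNReal.one_ne_top (hsubu B.1)
    have h3 : (0 : ℝ) ≤ (mIter (embMeas R R1 (Pln n)) k x B.1).toReal := ENNReal.toReal_nonneg
    have h4 : (0 : ℝ) ≤ (mIter (embMeas R R1 Plu) k x B.1).toReal := ENNReal.toReal_nonneg
    rw [abs_le]
    constructor <;> linarith
  refine squeeze_zero (fun n => ?_) (fun n => ?_) htoReal
  · exact le_ciSup_of_le (hbdd n) ⟨∅, MeasurableSet.empty, Set.empty_subset R⟩ (abs_nonneg _)
  · refine ciSup_le fun B => ?_
    have hnen : mIter (embMeas R R1 (Pln n)) k x B.1 ≠ ⊤ :=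
      ((hsubn n B.1).trans_lt ENNReal.one_lt_top).ne
    have hneu : mIter (embMeas R R1 Plu) k x B.1 ≠ ⊤ :=
      ((hsubu B.1).trans_lt ENNReal.one_lt_top).ne
    rw [abs_toReal_sub hnen hneu]
    exact ENNReal.toReal_mono
      (eDist_ne_top (hsubn n Set.univ) (hsubu Set.univ)) (apply_le_eDist B.2.1)
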